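/- In the rank-one case M = 1: for unit vectors θ^{(1)}, θ^{(2)} ∈ R^N and λ > 0, the KL divergence of N(0, λ θ^{(2)}(θ^{(2)})^T + I) from N(0, λ θ^{(1)}(θ^{(1)})^T + I) equals (1/2) h(λ) (1 − ⟨θ^{(1)}, θ^{(2)}⟩²), where h(λ) = λ²/(1+λ). -/

import Mathlib

open Matrix

section Aux
variable {N : ℕ}

lemma vecMulVec_mul_vecMulVec (u v x y : Fin N → ℝ) :
    vecMulVec u v * vecMulVec x y = (v ⬝ᵥ x) • vecMulVec u y := by
  ext i j
  simp only [mul_apply, vecMulVec_apply, Matrix.smul_apply, smul_eq_mul, dotProduct,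
    Finset.mul_sum, Finset.sum_mul]
  congr 1; ext k; ring

lemma trace_vecMulVec (u v : Fin N → ℝ) :
    (vecMulVec u v).trace = u ⬝ᵥ v := by
  simp [Matrix.trace, Matrix.diag, vecMulVec_apply, dotProduct]

lemma smul_vecMulVec (c : ℝ) (u v : Fin N → ℝ) :
    c • vecMulVec u v = vecMulVec (c • u) v := by
  ext i j; simp [vecMulVec_apply, mul_assoc]

lemma det_spiked (c : ℝ) (θ : Fin N → ℝ) :
    (c • vecMulVec θ θ + 1).det = 1 + c * (θ ⬝ᵥ θ) := by
  rw [smul_vecMulVec, vecMulVec_eq (Fin 1), add_comm, det_one_add_replicateCol_mul_replicateRow]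
  simp only [dotProduct, Pi.smul_apply, smul_eq_mul]
  rw [Finset.mul_sum]
  exact congrArg (1 + ·) (Finset.sum_congr rfl fun k _ => by ring)

end Aux

/-- KL divergence of `N(0,B)` from `N(0,A)`: `(1/2)[tr(B⁻¹A) − N + log(det B / det A)]`. -/
noncomputable def klGauss {N : ℕ} (A B : Matrix (Fin N) (Fin N) ℝ) : ℝ :=
  (1 / 2) * ((B⁻¹ * A).trace - N + Real.log (B.det / A.det))

theorem kl_rank_one_spiked (N : ℕ) (l : ℝ) (hl : 0 < l)
    (θ₁ θ₂ : Fin N → ℝ)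
    (h₁ : dotProduct θ₁ θ₁ = 1) (h₂ : dotProduct θ₂ θ₂ = 1) :
    klGauss (l • Matrix.vecMulVec θ₁ θ₁ + 1) (l • Matrix.vecMulVec θ₂ θ₂ + 1)
      = (1 / 2) * (l ^ 2 / (1 + l)) * (1 - (dotProduct θ₁ θ₂) ^ 2) := by
  have hl1 : (1 : ℝ) + l ≠ 0 := by positivity
  set c : ℝ := l / (1 + l) with hc
  set V₁ := vecMulVec θ₁ θ₁ with hV₁
  set V₂ := vecMulVec θ₂ θ₂ with hV₂
  set A := l • V₁ + 1
  set B := l • V₂ + 1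
  -- inverse of B
  have hBC : B * (1 - c • V₂) = 1 := by
    have : B * (1 - c • V₂)
        = 1 + (l - c - l * c * (θ₂ ⬝ᵥ θ₂)) • V₂ := by
      simp only [B, V₂, Matrix.mul_sub, Matrix.add_mul, Matrix.mul_one, Matrix.one_mul,
        Matrix.mul_smul, Matrix.smul_mul, _root_.vecMulVec_mul_vecMulVec, smul_smul]
      module
    rw [this, h₂]
    have : l - c - l * c * 1 = 0 := by
      rw [hc]; field_simp
      ring
    rw [this, zero_smul, add_zero]
  have hBinv : B⁻¹ = 1 - c • V₂ := Matrix.inv_eq_right_inv hBC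
  -- trace of B⁻¹ * A
  have hs : θ₂ ⬝ᵥ θ₁ = θ₁ ⬝ᵥ θ₂ := dotProduct_comm _ _
  have htr : (B⁻¹ * A).trace = l + N - c * l * (θ₁ ⬝ᵥ θ₂) ^ 2 - c := by
    rw [hBinv]
    have : (1 - c • V₂) * A
        = l • V₁ + 1 - (c * l * (θ₂ ⬝ᵥ θ₁)) • vecMulVec θ₂ θ₁ - c • V₂ := by
      simp only [A, V₁, V₂, Matrix.sub_mul, Matrix.one_mul, Matrix.mul_add, Matrix.mul_one,
        Matrix.smul_mul, Matrix.mul_smul, _root_.vecMulVec_mul_vecMulVec, smul_smul]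
      module
    rw [this]
    simp only [hV₁, hV₂, Matrix.trace_sub, Matrix.trace_add, Matrix.trace_smul, Matrix.trace_one,
      _root_.trace_vecMulVec, smul_eq_mul, h₂, hs, h₁, Fintype.card_fin]
    ring
  -- determinants
  have hdA : A.det = 1 + l := by rw [det_spiked, h₁, mul_one]
  have hdB : B.det = 1 + l := by rw [det_spiked, h₂, mul_one]
  rw [klGauss, htr, hdA, hdB, div_self hl1, Real.log_one]
  rw [hc]; field_simp
  ring
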